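/- arXiv:1808.02375 — 5 statements merged into one kernel-verified Lean document; each statement's English description precedes it below -/
import Mathlib

section
/- If two distinct vertices u and v of BH_n have a common neighbor, then they have exactly 2 common neighbors or exactly 2n common neighbors; moreover they have 2n common neighbors if and only if they differ only in the first coordinate (by 2 mod 4). -/
/-- The `n`-dimensional balanced hypercube `BH_n` (Wu–Huang). Vertices are
elements of `{0,1,2,3}^n`; a vertex `(a_0,…,a_{n-1})` is adjacent to
`((a_0 ± 1) mod 4, a_1, …, a_{n-1})` and, for each `i ≠ 0`, to
`((a_0 ± 1) mod 4, …, (a_i + (-1)^{a_0}) mod 4, …, a_{n-1})`. -/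
def balancedHypercube (n : ℕ) [NeZero n] :
    SimpleGraph (Fin n → ZMod 4) :=
  SimpleGraph.fromRel (fun u v =>
    (v 0 = u 0 + 1 ∨ v 0 = u 0 - 1) ∧
    ((∀ i, i ≠ 0 → v i = u i) ∨
      ∃ j : Fin n, j ≠ 0 ∧ v j = u j + (-1 : ZMod 4) ^ (u 0).val ∧
        ∀ i, i ≠ 0 → i ≠ j → v i = u i))

namespace BHproof

abbrev dd (x : ZMod 4) : ZMod 4 := (-1) ^ x.val

lemma dd_add_one : ∀ x : ZMod 4, dd (x + 1) = - dd x := by decide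
lemma dd_sub_one : ∀ x : ZMod 4, dd (x - 1) = - dd x := by decide
lemma dd_add_two : ∀ x : ZMod 4, dd (x + 2) = dd x := by decide
lemma dd_ne_zero : ∀ x : ZMod 4, dd x ≠ 0 := by decide
lemma dd_cases : ∀ x : ZMod 4, dd x = 1 ∨ dd x = 3 := by decide
lemma zmod4_ne_self : ∀ x : ZMod 4, ¬(x = x + 1 ∨ x = x - 1) := by decide
lemma zmod4_ne_add_two : ∀ x : ZMod 4, x ≠ x + 2 := by decide
lemma zmod4_a : ∀ a b c : ZMod 4, (c = a + 1 ∨ c = a - 1) → (c = b + 1 ∨ c = b - 1) →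
    b = a ∨ b = a + 2 := by decide
lemma zmod4_b : ∀ a c d : ZMod 4, (c = a + 1 ∨ c = a - 1) → (d = a + 1 ∨ d = a - 1) →
    d = c ∨ d = c + 2 := by decide

variable {n : ℕ} [NeZero n]

lemma adj_iff (u w : Fin n → ZMod 4) :
    (balancedHypercube n).Adj u w ↔
      (w 0 = u 0 + 1 ∨ w 0 = u 0 - 1) ∧
      ((∀ i, i ≠ 0 → w i = u i) ∨
        ∃ j : Fin n, j ≠ 0 ∧ w j = u j + dd (u 0) ∧ ∀ i, i ≠ 0 → i ≠ j → w i = u i) := by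
  rw [balancedHypercube, SimpleGraph.fromRel_adj]
  constructor
  · rintro ⟨hne, h | h⟩
    · exact h
    · obtain ⟨h0, h1⟩ := h
      have h0' : w 0 = u 0 + 1 ∨ w 0 = u 0 - 1 := by
        rcases h0 with h | h
        · right; rw [h]; ring
        · left; rw [h]; ring
      have hd : dd (w 0) = - dd (u 0) := by
        rcases h0' with h | h
        · rw [h]; exact dd_add_one _
        · rw [h]; exact dd_sub_one _
      refine ⟨h0', ?_⟩
      rcases h1 with h | ⟨j, hj0, hj1, hj2⟩
      · exact Or.inl fun i hi => (h i hi).symm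
      · refine Or.inr ⟨j, hj0, ?_, fun i hi hij => (hj2 i hi hij).symm⟩
        have h2 : u j = w j + dd (w 0) := hj1
        rw [hd] at h2
        linear_combination -h2
  · rintro ⟨h0, h1⟩
    have hne : u ≠ w := by
      intro he
      have h00 : w 0 = u 0 := by rw [he]
      rw [h00] at h0
      exact zmod4_ne_self (u 0) h0
    exact ⟨hne, Or.inl ⟨h0, h1⟩⟩


lemma off_mem (u w : Fin n → ZMod 4) (h : (balancedHypercube n).Adj u w) :
    ∀ i, i ≠ 0 → w i = u i ∨ w i = u i + dd (u 0) := by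
  rcases ((adj_iff u w).1 h).2 with h' | ⟨j, hj0, hj1, hj2⟩
  · exact fun i hi => Or.inl (h' i hi)
  · intro i hi
    by_cases hij : i = j
    · subst hij; exact Or.inr hj1
    · exact Or.inl (hj2 i hi hij)

lemma off_other (u w : Fin n → ZMod 4) (h : (balancedHypercube n).Adj u w) {i j : Fin n}
    (hi : i ≠ 0) (hj : j ≠ 0) (hij : j ≠ i)
    (hwi : w i = u i + dd (u 0)) : w j = u j := by
  rcases ((adj_iff u w).1 h).2 with h' | ⟨k, hk0, hk1, hk2⟩
  · exfalso
    exact dd_ne_zero (u 0) (by linear_combination h' i hi - hwi)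
  · by_cases hik : i = k
    · subst hik; exact hk2 j hj hij
    · exfalso
      exact dd_ne_zero (u 0) (by linear_combination hk2 i hi hik - hwi)

lemma v0_cases (u v w : Fin n → ZMod 4) (hu : (balancedHypercube n).Adj u w)
    (hv : (balancedHypercube n).Adj v w) : v 0 = u 0 ∨ v 0 = u 0 + 2 :=
  zmod4_a _ _ _ ((adj_iff u w).1 hu).1 ((adj_iff v w).1 hv).1

lemma key_aux (u v w w' : Fin n → ZMod 4)
    (hu : (balancedHypercube n).Adj u w) (hv : (balancedHypercube n).Adj v w)
    (hu' : (balancedHypercube n).Adj u w') (hv' : (balancedHypercube n).Adj v w')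
    (hdv : dd (v 0) = dd (u 0)) (i0 : Fin n) (hi00 : i0 ≠ 0)
    (hwa : w i0 = u i0 + dd (u 0)) (hwb : w' i0 = u i0) :
    ∀ i, i ≠ 0 → u i = v i := by
  have hva := off_mem v w hv i0 hi00
  have hvb := off_mem v w' hv' i0 hi00
  rw [hdv] at hva hvb
  have hkey : w i0 = v i0 + dd (u 0) ∧ w' i0 = v i0 := by
    rcases hva with h1 | h1 <;> rcases hvb with h2 | h2
    · exact absurd (by linear_combination h1 - h2 - hwa + hwb) (dd_ne_zero (u 0))
    · exfalso
      have h3 : dd (u 0) + dd (u 0) = 0 := by linear_combination h1 - h2 - hwa + hwb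
      rcases dd_cases (u 0) with h | h <;> rw [h] at h3 <;> revert h3 <;> decide
    · exact ⟨h1, h2⟩
    · exact absurd (by linear_combination h1 - h2 - hwa + hwb) (dd_ne_zero (u 0))
  intro i hi
  by_cases hii : i = i0
  · subst hii; linear_combination hkey.1 - hwa
  · have h1 : w i = u i := off_other u w hu hi00 hi hii hwa
    have h2 : w i = v i := off_other v w hv hi00 hi hii (by rw [hdv]; exact hkey.1)
    rw [← h1, h2]

lemma key (u v w w' : Fin n → ZMod 4)
    (hu : (balancedHypercube n).Adj u w) (hv : (balancedHypercube n).Adj v w)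
    (hu' : (balancedHypercube n).Adj u w') (hv' : (balancedHypercube n).Adj v w')
    (h0 : w 0 = w' 0) (hne : w ≠ w') :
    ∀ i, i ≠ 0 → u i = v i := by
  have hdv : dd (v 0) = dd (u 0) := by
    rcases v0_cases u v w hu hv with h | h
    · rw [h]
    · rw [h]; exact dd_add_two _
  obtain ⟨i0, hi0ne⟩ : ∃ i, w i ≠ w' i := Function.ne_iff.1 hne
  have hi00 : i0 ≠ 0 := fun h' => hi0ne (by rw [h', h0])
  rcases off_mem u w hu i0 hi00 with hwa | hwa <;>
    rcases off_mem u w' hu' i0 hi00 with hwb | hwb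
  · exact absurd (hwa.trans hwb.symm) hi0ne
  · exact key_aux u v w' w hu' hv' hu hv hdv i0 hi00 hwb hwa
  · exact key_aux u v w w' hu hv hu' hv' hdv i0 hi00 hwa hwb
  · exact absurd (hwa.trans hwb.symm) hi0ne

lemma eq_update (u v w w' : Fin n → ZMod 4) (huv : u ≠ v)
    (hu : (balancedHypercube n).Adj u w) (hv : (balancedHypercube n).Adj v w)
    (hu' : (balancedHypercube n).Adj u w') (hv' : (balancedHypercube n).Adj v w')
    (h0 : w 0 = w' 0) (hne : w ≠ w') :
    v = Function.update u 0 (u 0 + 2) := by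
  have hoff := key u v w w' hu hv hu' hv' h0 hne
  have h02 : v 0 = u 0 + 2 := by
    rcases v0_cases u v w hu hv with h | h
    · exfalso; apply huv; funext i
      by_cases hi : i = 0
      · rw [hi]; exact h.symm
      · exact (hoff i hi)
    · exact h
  funext i
  by_cases hi : i = 0
  · rw [hi, Function.update_self]; exact h02
  · rw [Function.update_of_ne hi]; exact (hoff i hi).symm

lemma flip_adj (u w : Fin n → ZMod 4) (h : (balancedHypercube n).Adj u w) :
    (balancedHypercube n).Adj u (Function.update w 0 (w 0 + 2)) := by
  obtain ⟨h0, h1⟩ := (adj_iff u w).1 h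
  rw [adj_iff]
  constructor
  · rw [Function.update_self]
    rcases h0 with h' | h'
    · right; rw [h']
      have h4 : (4 : ZMod 4) = 0 := by decide
      linear_combination h4
    · left; rw [h']; ring
  · have he : ∀ i : Fin n, i ≠ 0 → Function.update w 0 (w 0 + 2) i = w i :=
      fun i hi => Function.update_of_ne hi _ _
    rcases h1 with hP | ⟨j, hj0, hj1, hj2⟩
    · exact Or.inl fun i hi => by rw [he i hi]; exact hP i hi
    · exact Or.inr ⟨j, hj0, by rw [he j hj0]; exact hj1,
        fun i hi hij => by rw [he i hi]; exact hj2 i hi hij⟩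


def nbr (u : Fin n → ZMod 4) (b : Bool) (j : Fin n) : Fin n → ZMod 4 :=
  if j = 0 then Function.update u 0 (u 0 + (if b then 1 else -1))
  else Function.update (Function.update u 0 (u 0 + (if b then 1 else -1))) j
    (u j + dd (u 0))

lemma nbr_apply_zero (u : Fin n → ZMod 4) (b : Bool) (j : Fin n) :
    nbr u b j 0 = u 0 + (if b then 1 else -1) := by
  unfold nbr
  by_cases hj : j = 0
  · rw [if_pos hj, Function.update_self]
  · rw [if_neg hj, Function.update_of_ne (Ne.symm hj), Function.update_self]

lemma nbr_apply_zero' (u : Fin n → ZMod 4) (b : Bool) {i : Fin n} (hi : i ≠ 0) :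
    nbr u b 0 i = u i := by
  unfold nbr
  rw [if_pos rfl, Function.update_of_ne hi]

lemma nbr_apply_self (u : Fin n → ZMod 4) (b : Bool) {j : Fin n} (hj : j ≠ 0) :
    nbr u b j j = u j + dd (u 0) := by
  unfold nbr
  rw [if_neg hj, Function.update_self]

lemma nbr_apply_other (u : Fin n → ZMod 4) (b : Bool) {i j : Fin n} (hj : j ≠ 0)
    (hi : i ≠ 0) (hij : i ≠ j) : nbr u b j i = u i := by
  unfold nbr
  rw [if_neg hj, Function.update_of_ne hij, Function.update_of_ne hi]

lemma mem_nbr_iff (u w : Fin n → ZMod 4) :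
    (balancedHypercube n).Adj u w ↔ ∃ b j, nbr u b j = w := by
  constructor
  · intro h
    obtain ⟨h0, h1⟩ := (adj_iff u w).1 h
    obtain ⟨b, hb⟩ : ∃ b : Bool, w 0 = u 0 + (if b then 1 else -1) := by
      rcases h0 with h' | h'
      · exact ⟨true, by simpa using h'⟩
      · refine ⟨false, ?_⟩
        rw [if_neg (by simp)]
        rw [h']; ring
    rcases h1 with hP | ⟨j, hj0, hj1, hj2⟩
    · refine ⟨b, 0, funext fun i => ?_⟩
      by_cases hi : i = 0
      · rw [hi, nbr_apply_zero, hb]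
      · rw [nbr_apply_zero' u b hi, hP i hi]
    · refine ⟨b, j, funext fun i => ?_⟩
      by_cases hi : i = 0
      · rw [hi, nbr_apply_zero, hb]
      · by_cases hij : i = j
        · rw [hij, nbr_apply_self u b hj0, hj1]
        · rw [nbr_apply_other u b hj0 hi hij, hj2 i hi hij]
  · rintro ⟨b, j, rfl⟩
    rw [adj_iff]
    constructor
    · rw [nbr_apply_zero]
      cases b
      · right; rw [if_neg (by simp)]; ring
      · left; rw [if_pos rfl]
    · by_cases hj : j = 0
      · subst hj
        exact Or.inl fun i hi => nbr_apply_zero' u b hi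
      · exact Or.inr ⟨j, hj, nbr_apply_self u b hj,
          fun i hi hij => nbr_apply_other u b hj hi hij⟩

lemma nbr_injective (u : Fin n → ZMod 4) :
    Function.Injective (fun p : Bool × Fin n => nbr u p.1 p.2) := by
  rintro ⟨b, j⟩ ⟨b', j'⟩ hf
  simp only at hf
  have h0 : u 0 + (if b then 1 else -1) = u 0 + (if b' then 1 else -1) := by
    rw [← nbr_apply_zero u b j, ← nbr_apply_zero u b' j', hf]
  have hbb : b = b' := by
    cases b <;> cases b' <;> simp at h0 ⊢ <;> revert h0 <;> decide
  subst hbb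
  have hjj : j = j' := by
    by_cases hj : j = 0 <;> by_cases hj' : j' = 0
    · rw [hj, hj']
    · exfalso
      have h1 : nbr u b j j' = u j' := by rw [hj]; exact nbr_apply_zero' u b hj'
      have h2 : nbr u b j' j' = u j' + dd (u 0) := nbr_apply_self u b hj'
      rw [hf, h2] at h1
      exact dd_ne_zero (u 0) (by linear_combination h1)
    · exfalso
      have h1 : nbr u b j' j = u j := by rw [hj']; exact nbr_apply_zero' u b hj
      have h2 : nbr u b j j = u j + dd (u 0) := nbr_apply_self u b hj
      rw [← hf, h2] at h1
      exact dd_ne_zero (u 0) (by linear_combination h1)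
    · by_cases hij : j = j'
      · exact hij
      · exfalso
        have h1 : nbr u b j' j = u j := nbr_apply_other u b hj' hj hij
        have h2 : nbr u b j j = u j + dd (u 0) := nbr_apply_self u b hj
        rw [← hf, h2] at h1
        exact dd_ne_zero (u 0) (by linear_combination h1)
  rw [hjj]

lemma ncard_adj (u : Fin n → ZMod 4) :
    {w | (balancedHypercube n).Adj u w}.ncard = 2 * n := by
  classical
  have hset : {w | (balancedHypercube n).Adj u w}
      = Set.range (fun p : Bool × Fin n => nbr u p.1 p.2) := by
    ext w
    simp only [Set.mem_setOf_eq, Set.mem_range, Prod.exists, mem_nbr_iff]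
  have hfin : Set.range (fun p : Bool × Fin n => nbr u p.1 p.2)
      = ↑(Finset.image (fun p : Bool × Fin n => nbr u p.1 p.2) Finset.univ) := by
    rw [Finset.coe_image, Finset.coe_univ, Set.image_univ]
  rw [hset, hfin, Set.ncard_coe_finset,
    Finset.card_image_of_injective _ (nbr_injective u), Finset.card_univ,
    Fintype.card_prod, Fintype.card_bool, Fintype.card_fin]

lemma adj_update_iff (u w : Fin n → ZMod 4) :
    (balancedHypercube n).Adj (Function.update u 0 (u 0 + 2)) w ↔
      (balancedHypercube n).Adj u w := by
  rw [adj_iff, adj_iff]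
  have e0 : Function.update u 0 (u 0 + 2) 0 = u 0 + 2 := Function.update_self _ _ _
  have ei : ∀ i : Fin n, i ≠ 0 → Function.update u 0 (u 0 + 2) i = u i :=
    fun i hi => Function.update_of_ne hi _ _
  rw [e0, dd_add_two]
  have hc : (w 0 = u 0 + 2 + 1 ∨ w 0 = u 0 + 2 - 1) ↔ (w 0 = u 0 + 1 ∨ w 0 = u 0 - 1) := by
    have : ∀ a c : ZMod 4, (c = a + 2 + 1 ∨ c = a + 2 - 1) ↔ (c = a + 1 ∨ c = a - 1) := by
      decide
    exact this (u 0) (w 0)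
  rw [hc]
  have hd : ∀ x : Fin n → ZMod 4,
      ((∀ i, i ≠ 0 → w i = x i) ∨
        ∃ j : Fin n, j ≠ 0 ∧ w j = x j + dd (u 0) ∧ ∀ i, i ≠ 0 → i ≠ j → w i = x i) →
      True := fun _ _ => trivial
  constructor
  · rintro ⟨h0, h1⟩
    refine ⟨by tauto, ?_⟩
    rcases h1 with hP | ⟨j, hj0, hj1, hj2⟩
    · exact Or.inl fun i hi => by rw [← ei i hi]; exact hP i hi
    · exact Or.inr ⟨j, hj0, by rw [← ei j hj0]; exact hj1,
        fun i hi hij => by rw [← ei i hi]; exact hj2 i hi hij⟩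
  · rintro ⟨h0, h1⟩
    refine ⟨by tauto, ?_⟩
    rcases h1 with hP | ⟨j, hj0, hj1, hj2⟩
    · exact Or.inl fun i hi => by rw [ei i hi]; exact hP i hi
    · exact Or.inr ⟨j, hj0, by rw [ei j hj0]; exact hj1,
        fun i hi hij => by rw [ei i hi]; exact hj2 i hi hij⟩


end BHproof

open BHproof in
/-- If two distinct vertices of `BH_n` have a common neighbor, then they have
exactly `2` or exactly `2n` common neighbors, and they have `2n` common
neighbors iff they differ only in the first coordinate (by `2` mod `4`). -/
theorem balancedHypercube_common_neighbors (n : ℕ) [NeZero n] (hn : 1 ≤ n)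
    (u v : Fin n → ZMod 4) (huv : u ≠ v)
    (h : ∃ w, (balancedHypercube n).Adj u w ∧ (balancedHypercube n).Adj v w) :
    ({w | (balancedHypercube n).Adj u w ∧ (balancedHypercube n).Adj v w}.ncard = 2 ∨
      {w | (balancedHypercube n).Adj u w ∧ (balancedHypercube n).Adj v w}.ncard = 2 * n) ∧
    ({w | (balancedHypercube n).Adj u w ∧ (balancedHypercube n).Adj v w}.ncard = 2 * n ↔
      v = Function.update u 0 (u 0 + 2)) := by
  classical
  obtain ⟨w₁, hw₁u, hw₁v⟩ := h
  by_cases hA : v = Function.update u 0 (u 0 + 2)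
  · have hSeq : {w | (balancedHypercube n).Adj u w ∧ (balancedHypercube n).Adj v w}
        = {w | (balancedHypercube n).Adj u w} := by
      ext w
      simp only [Set.mem_setOf_eq]
      exact ⟨fun h' => h'.1, fun h' => ⟨h', by rw [hA, adj_update_iff]; exact h'⟩⟩
    rw [hSeq, ncard_adj]
    exact ⟨Or.inr rfl, ⟨fun _ => hA, fun _ => rfl⟩⟩
  · set w₂ := Function.update w₁ 0 (w₁ 0 + 2) with hw₂def
    have hw₂u : (balancedHypercube n).Adj u w₂ := flip_adj u w₁ hw₁u
    have hw₂v : (balancedHypercube n).Adj v w₂ := flip_adj v w₁ hw₁v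
    have hw₂0 : w₂ 0 = w₁ 0 + 2 := Function.update_self _ _ _
    have hne12 : w₁ ≠ w₂ := by
      intro h'
      have := hw₂0
      rw [← h'] at this
      exact zmod4_ne_add_two (w₁ 0) this
    have huniq : ∀ x, (balancedHypercube n).Adj u x → (balancedHypercube n).Adj v x →
        ∀ y, (balancedHypercube n).Adj u y → (balancedHypercube n).Adj v y →
        x 0 = y 0 → x = y := by
      intro x hxu hxv y hyu hyv hxy
      by_contra hne
      exact hA (eq_update u v x y huv hxu hxv hyu hyv hxy hne)
    have hSeq : {w | (balancedHypercube n).Adj u w ∧ (balancedHypercube n).Adj v w}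
        = {w₁, w₂} := by
      ext x
      simp only [Set.mem_setOf_eq, Set.mem_insert_iff, Set.mem_singleton_iff]
      constructor
      · rintro ⟨hxu, hxv⟩
        have h0x := ((adj_iff u x).1 hxu).1
        have h01 := ((adj_iff u w₁).1 hw₁u).1
        rcases zmod4_b (u 0) (w₁ 0) (x 0) h01 h0x with h' | h'
        · exact Or.inl (huniq x hxu hxv w₁ hw₁u hw₁v h')
        · refine Or.inr (huniq x hxu hxv w₂ hw₂u hw₂v ?_)
          rw [h', hw₂0]
      · rintro (rfl | rfl)
        · exact ⟨hw₁u, hw₁v⟩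
        · exact ⟨hw₂u, hw₂v⟩
    have h2 : {w | (balancedHypercube n).Adj u w ∧ (balancedHypercube n).Adj v w}.ncard
        = 2 := by
      rw [hSeq]
      exact Set.ncard_pair hne12
    rw [h2]
    refine ⟨Or.inl rfl, ⟨fun h2n => ?_, fun h' => absurd h' hA⟩⟩
    exfalso
    have hn1 : n = 1 := by omega
    have hall : ∀ i : Fin n, i = 0 := by
      intro i
      have hlt := i.isLt
      apply Fin.ext
      rw [Fin.val_zero]
      omega
    apply hA
    rcases v0_cases u v w₁ hw₁u hw₁v with h' | h'
    · exfalso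
      apply huv
      funext i
      rw [hall i]
      exact h'.symm
    · funext i
      rw [hall i, Function.update_self]
      exact h'
end

section
/- For n ≥ 2, there exists a family of exactly n vertex-disjoint paths of length 2 (copies of K_{1,2}) in BH_n whose vertex deletion disconnects BH_n; consequently κ(BH_n; K_{1,2}) ≤ n. -/
section Aux

variable {n : ℕ} [NeZero n]

/-- auxiliary vertex: coordinate 0 is `c`, coordinate `j` (if `j ≠ 0`) is 1, rest 0. -/
def gv (j : Fin n) (c : ZMod 4) : Fin n → ZMod 4 :=
  fun i => if i = 0 then c else if i = j then 1 else 0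

lemma gv_zero (j : Fin n) (c : ZMod 4) : gv j c 0 = c := by simp [gv]

lemma gv_ne {j j' : Fin n} (h : j ≠ j') (c c' : ZMod 4) : gv j c ≠ gv j' c' := by
  intro he
  rcases eq_or_ne j' 0 with h0 | h0
  · have hj : j ≠ 0 := h0 ▸ h
    have h2 := congrFun he j
    simp only [gv, if_neg hj, if_pos rfl] at h2
    rw [if_neg (h0 ▸ hj : j ≠ j')] at h2
    exact absurd h2 (by decide)
  · have h2 := congrFun he j'
    simp only [gv, if_neg h0, if_neg (Ne.symm h), if_pos rfl] at h2
    exact absurd h2 (by decide)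

def Aset (j : Fin n) : Set (Fin n → ZMod 4) := {gv j 1, gv j 2, gv j 3}

lemma Aset_inj : Function.Injective (Aset (n := n)) := by
  intro j j' h
  by_contra hne
  have h1 : gv j 1 ∈ Aset j' := h ▸ (by simp [Aset] : gv j 1 ∈ Aset j)
  rcases h1 with h1 | h1 | h1 <;> exact gv_ne hne _ _ h1

lemma gv_mem_compl {x : Fin n → ZMod 4} (hx : x 0 = 0) (j : Fin n) : x ∉ Aset j := by
  rintro (h | h | h) <;>
    (have := congrFun h 0; rw [hx, gv_zero] at this; exact absurd this (by decide))

lemma isolated_not_reachable {V : Type*} {G : SimpleGraph V} {a b : V}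
    (hiso : ∀ c, ¬ G.Adj a c) (h : G.Reachable a b) : a = b := by
  obtain ⟨p⟩ := h
  cases p with
  | nil => rfl
  | cons h q => exact absurd h (hiso _)

lemma adj_zero {v : Fin n → ZMod 4} (h : (balancedHypercube n).Adj 0 v) :
    ∃ j, v ∈ Aset j := by
  rw [balancedHypercube, SimpleGraph.fromRel_adj] at h
  obtain ⟨hne, h | h⟩ := h
  · obtain ⟨hc, hrest⟩ := h
    simp only [Pi.zero_apply, zero_add, ZMod.val_zero, pow_zero] at hc hrest
    have hc' : v 0 = 1 ∨ v 0 = 3 := by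
      rcases hc with h1 | h1
      · exact Or.inl h1
      · exact Or.inr (by rw [h1]; decide)
    rcases hrest with hr | ⟨j, hj0, hvj, hrest⟩
    · refine ⟨0, ?_⟩
      have hv : v = gv 0 (v 0) := by
        funext i
        by_cases hi : i = 0
        · subst hi; simp [gv]
        · simp [gv, hi, hr i hi]
      rcases hc' with h1 | h1
      · left; rw [hv, h1]
      · right; right; rw [hv, h1]; rfl
    · refine ⟨j, ?_⟩
      have hv : v = gv j (v 0) := by
        funext i
        by_cases hi : i = 0
        · subst hi; simp [gv]
        · by_cases hij : i = j
          · subst hij; simp [gv, hi, hvj]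
          · simp [gv, hi, hij, hrest i hi hij]
      rcases hc' with h1 | h1
      · left; rw [hv, h1]
      · right; right; rw [hv, h1]; rfl
  · obtain ⟨hc, hrest⟩ := h
    simp only [Pi.zero_apply] at hc hrest
    have hc' : v 0 = 1 ∨ v 0 = 3 := by
      rcases hc with h1 | h1
      · right
        have : v 0 = 0 - 1 := eq_sub_of_add_eq h1.symm
        rw [this]; decide
      · left
        have h2 : v 0 = 0 + 1 := sub_eq_iff_eq_add.mp h1.symm
        rw [h2]; decide
    have hpow : (-1 : ZMod 4) ^ (v 0).val = 3 := by
      rcases hc' with h1 | h1 <;> rw [h1] <;> decide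
    rcases hrest with hr | ⟨j, hj0, hvj, hrest⟩
    · refine ⟨0, ?_⟩
      have hv : v = gv 0 (v 0) := by
        funext i
        by_cases hi : i = 0
        · subst hi; simp [gv]
        · simp [gv, hi, (hr i hi).symm]
      rcases hc' with h1 | h1
      · left; rw [hv, h1]
      · right; right; rw [hv, h1]; rfl
    · refine ⟨j, ?_⟩
      rw [hpow] at hvj
      have hvj' : v j = 1 := by
        have : v j + 3 = 0 := hvj.symm
        have h4 : v j = 0 - 3 := eq_sub_of_add_eq this
        rw [h4]; decide
      have hv : v = gv j (v 0) := by
        funext i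
        by_cases hi : i = 0
        · subst hi; simp [gv]
        · by_cases hij : i = j
          · subst hij; simp [gv, hi, hvj']
          · simp [gv, hi, hij, (hrest i hi hij).symm]
      rcases hc' with h1 | h1
      · left; rw [hv, h1]
      · right; right; rw [hv, h1]; rfl

end Aux

/-- For `n ≥ 2`, there is a family of exactly `n` vertex-disjoint copies of
`K_{1,2}` (paths on three vertices) in `BH_n` whose vertex deletion disconnects
`BH_n`; hence `κ(BH_n; K_{1,2}) ≤ n`. -/
theorem balancedHypercube_K12_structure_cut (n : ℕ) [NeZero n] (hn : 2 ≤ n) :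
    ∃ F : Finset (Set (Fin n → ZMod 4)), F.card = n ∧
      (↑F : Set (Set (Fin n → ZMod 4))).Pairwise Disjoint ∧
      (∀ A ∈ F, ∃ x y z : Fin n → ZMod 4, x ≠ z ∧
        (balancedHypercube n).Adj y x ∧ (balancedHypercube n).Adj y z ∧
        A = {x, y, z}) ∧
      ¬ ((balancedHypercube n).induce ((⋃ A ∈ F, A)ᶜ)).Connected := by
  refine ⟨Finset.univ.map ⟨Aset, Aset_inj⟩, ?_, ?_, ?_, ?_⟩
  · simp
  · rintro a ha b hb hab
    simp only [Finset.coe_map, Set.mem_image, Finset.coe_univ, Set.mem_univ, true_and,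
      Function.Embedding.coeFn_mk] at ha hb
    obtain ⟨j, rfl⟩ := ha
    obtain ⟨j', rfl⟩ := hb
    have hjj : j ≠ j' := fun h => hab (by rw [h])
    rw [Set.disjoint_left]
    rintro x (hx | hx | hx) <;> subst hx <;>
      (rintro (h | h | h) <;> exact gv_ne hjj _ _ h)
  · intro A hA
    simp only [Finset.mem_map, Finset.mem_univ, true_and, Function.Embedding.coeFn_mk] at hA
    obtain ⟨j, rfl⟩ := hA
    refine ⟨gv j 1, gv j 2, gv j 3, ?_, ?_, ?_, rfl⟩
    · intro h; have := congrFun h 0; rw [gv_zero, gv_zero] at this; exact absurd this (by decide)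
    · rw [balancedHypercube, SimpleGraph.fromRel_adj]
      refine ⟨?_, Or.inl ⟨?_, Or.inl ?_⟩⟩
      · intro h; have := congrFun h 0; rw [gv_zero, gv_zero] at this; exact absurd this (by decide)
      · rw [gv_zero, gv_zero]; right; decide
      · intro i hi; simp [gv, hi]
    · rw [balancedHypercube, SimpleGraph.fromRel_adj]
      refine ⟨?_, Or.inl ⟨?_, Or.inl ?_⟩⟩
      · intro h; have := congrFun h 0; rw [gv_zero, gv_zero] at this; exact absurd this (by decide)
      · rw [gv_zero, gv_zero]; left; decide
      · intro i hi; simp [gv, hi]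
  · intro hcon
    set S : Set (Fin n → ZMod 4) :=
      ⋃ A ∈ Finset.univ.map ⟨Aset (n := n), Aset_inj⟩, A with hS
    have hmemS : ∀ x : Fin n → ZMod 4, x ∈ S ↔ ∃ j, x ∈ Aset j := by
      intro x
      simp [hS, Set.mem_iUnion]
    have h0 : (0 : Fin n → ZMod 4) ∈ Sᶜ := by
      rw [Set.mem_compl_iff, hmemS]
      rintro ⟨j, hj⟩
      exact gv_mem_compl (by simp) j hj
    set one : Fin n := ⟨1, by omega⟩ with hone
    have hone0 : (0 : Fin n) ≠ one := by
      intro h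
      have := congrArg Fin.val h
      simp [hone] at this
    set w : Fin n → ZMod 4 := fun i => if i = one then 2 else 0 with hw
    have hw0 : w 0 = 0 := by simp [hw, hone0]
    have hwc : w ∈ Sᶜ := by
      rw [Set.mem_compl_iff, hmemS]
      rintro ⟨j, hj⟩
      exact gv_mem_compl hw0 j hj
    have hiso : ∀ c, ¬ ((balancedHypercube n).induce Sᶜ).Adj ⟨0, h0⟩ c := by
      rintro ⟨c, hc⟩ hadj
      have hadj' : (balancedHypercube n).Adj 0 c := hadj
      obtain ⟨j, hj⟩ := adj_zero hadj'
      exact hc ((hmemS c).2 ⟨j, hj⟩)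
    have := isolated_not_reachable hiso (hcon.preconnected ⟨0, h0⟩ ⟨w, hwc⟩)
    have h2 := congrFun (congrArg Subtype.val this) one
    simp [hw] at h2
    exact absurd h2.symm (by decide)
end

section
/- For n ≥ 2, there exists a family of exactly n vertex-disjoint copies of the star K_{1,3} in BH_n whose vertex deletion disconnects BH_n; hence κ(BH_n; K_{1,3}) ≤ n. -/
/-- Auxiliary vertex: value `a` at coordinate 0, value `b` at coordinate `j`, else 0. -/
def bhV (n : ℕ) [NeZero n] (a : ZMod 4) (j : Fin n) (b : ZMod 4) :
    Fin n → ZMod 4 :=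
  fun k => if k = 0 then a else if k = j then b else 0

/-- The family of stars. -/
def bhA (n : ℕ) [NeZero n] (j : Fin n) : Set (Fin n → ZMod 4) :=
  if j = 0 then
    {bhV n 2 1 3, bhV n 1 0 0, bhV n 3 0 0, bhV n 1 1 3}
  else
    {bhV n 2 j 1, bhV n 1 j 1, bhV n 3 j 1, bhV n 1 j 2}

lemma bhV_zero (n : ℕ) [NeZero n] (a : ZMod 4) (j : Fin n) (b : ZMod 4) :
    bhV n a j b 0 = a := by simp [bhV]

lemma bhV_app (n : ℕ) [NeZero n] (a : ZMod 4) (j : Fin n) (b : ZMod 4)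
    (k : Fin n) (hk : k ≠ 0) : bhV n a j b k = if k = j then b else 0 := by
  simp [bhV, hk]

lemma one_ne_zero_fin (n : ℕ) [NeZero n] (hn : 2 ≤ n) : (1 : Fin n) ≠ 0 := by
  have := Fin.val_one' n
  simp [Fin.ext_iff, this, Nat.mod_eq_of_lt (show 1 < n by omega)]

lemma eq_bhV {n : ℕ} [NeZero n] {x : Fin n → ZMod 4} {a b : ZMod 4} {j : Fin n}
    (h0 : x 0 = a) (hj : j ≠ 0 → x j = b)
    (hrest : ∀ k, k ≠ 0 → k ≠ j → x k = 0) : x = bhV n a j b := by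
  funext k
  by_cases hk0 : k = 0
  · subst hk0; rw [bhV_zero]; exact h0
  by_cases hkj : k = j
  · subst hkj
    rw [bhV_app _ _ _ _ _ hk0, if_pos rfl]
    exact hj hk0
  · rw [bhV_app _ _ _ _ _ hk0, if_neg hkj]
    exact hrest k hk0 hkj

/-- Every element of a star is either odd at coordinate 0 or nonzero somewhere else. -/
lemma bhA_elem (n : ℕ) [NeZero n] (hn : 2 ≤ n) (j : Fin n) (x : Fin n → ZMod 4)
    (hx : x ∈ bhA n j) : (x 0 = 1 ∨ x 0 = 3) ∨ ∃ k, k ≠ 0 ∧ x k ≠ 0 := by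
  have h1 := one_ne_zero_fin n hn
  by_cases hj : j = 0
  · subst hj
    rw [bhA, if_pos rfl] at hx
    rcases hx with rfl | rfl | rfl | rfl
    · exact Or.inr ⟨1, h1, by rw [bhV_app _ _ _ _ _ h1, if_pos rfl]; decide⟩
    · exact Or.inl (Or.inl (bhV_zero _ _ _ _))
    · exact Or.inl (Or.inr (bhV_zero _ _ _ _))
    · exact Or.inl (Or.inl (bhV_zero _ _ _ _))
  · rw [bhA, if_neg hj] at hx
    rcases hx with rfl | rfl | rfl | rfl
    · exact Or.inr ⟨j, hj, by rw [bhV_app _ _ _ _ _ hj, if_pos rfl]; decide⟩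
    · exact Or.inl (Or.inl (bhV_zero _ _ _ _))
    · exact Or.inl (Or.inr (bhV_zero _ _ _ _))
    · exact Or.inl (Or.inl (bhV_zero _ _ _ _))

lemma zero_notmem_bhA (n : ℕ) [NeZero n] (hn : 2 ≤ n) (j : Fin n) :
    (0 : Fin n → ZMod 4) ∉ bhA n j := by
  intro hx
  rcases bhA_elem n hn j 0 hx with (h | h) | ⟨k, _, hk⟩
  · rw [Pi.zero_apply] at h; exact absurd h (by decide)
  · rw [Pi.zero_apply] at h; exact absurd h (by decide)
  · exact hk rfl

lemma z2_notmem_bhA (n : ℕ) [NeZero n] (hn : 2 ≤ n) (j : Fin n) :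
    bhV n 2 0 0 ∉ bhA n j := by
  intro hx
  rcases bhA_elem n hn j _ hx with (h | h) | ⟨k, hk0, hk⟩
  · rw [bhV_zero] at h; exact absurd h (by decide)
  · rw [bhV_zero] at h; exact absurd h (by decide)
  · apply hk
    rw [bhV_app _ _ _ _ _ hk0]
    split_ifs <;> rfl

/-- values on star 0 away from coordinate 0 are in {0,3} -/
lemma bhA0_val (n : ℕ) [NeZero n] (x : Fin n → ZMod 4) (hx : x ∈ bhA n 0)
    (k : Fin n) (hk : k ≠ 0) : x k = 0 ∨ x k = 3 := by
  rw [bhA, if_pos rfl] at hx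
  rcases hx with rfl | rfl | rfl | rfl <;>
    rw [bhV_app _ _ _ _ _ hk] <;> split_ifs <;> simp

lemma bhAj_val (n : ℕ) [NeZero n] {j : Fin n} (hj : j ≠ 0) (x : Fin n → ZMod 4)
    (hx : x ∈ bhA n j) :
    (x j = 1 ∨ x j = 2) ∧ ∀ k, k ≠ 0 → k ≠ j → x k = 0 := by
  rw [bhA, if_neg hj] at hx
  rcases hx with rfl | rfl | rfl | rfl <;>
    refine ⟨by rw [bhV_app _ _ _ _ _ hj, if_pos rfl]; simp,
      fun k hk0 hkj => by rw [bhV_app _ _ _ _ _ hk0, if_neg hkj]⟩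

lemma bhA_disjoint (n : ℕ) [NeZero n] {j k : Fin n} (hjk : j ≠ k) :
    Disjoint (bhA n j) (bhA n k) := by
  rw [Set.disjoint_left]
  intro x hxj hxk
  by_cases hj : j = 0
  · subst hj
    have hk : k ≠ 0 := fun h => hjk h.symm
    have h1 := (bhAj_val n hk x hxk).1
    have h2 := bhA0_val n x hxj k hk
    rcases h1 with h1 | h1 <;> rcases h2 with h2 | h2 <;>
      rw [h1] at h2 <;> exact absurd h2 (by decide)
  · by_cases hk : k = 0
    · subst hk
      have h1 := (bhAj_val n hj x hxj).1
      have h2 := bhA0_val n x hxk j hj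
      rcases h1 with h1 | h1 <;> rcases h2 with h2 | h2 <;>
        rw [h1] at h2 <;> exact absurd h2 (by decide)
    · have h1 := (bhAj_val n hk x hxk).1
      have h2 := (bhAj_val n hj x hxj).2 k hk (fun h => hjk h.symm)
      rcases h1 with h1 | h1 <;> rw [h1] at h2 <;> exact absurd h2 (by decide)

lemma bhV_ne {n : ℕ} [NeZero n] {a b a' b' : ZMod 4} {j j' : Fin n}
    (h : a ≠ a') : bhV n a j b ≠ bhV n a' j' b' := by
  intro he
  have := congrFun he 0
  rw [bhV_zero, bhV_zero] at this
  exact h this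

lemma bhA_star (n : ℕ) [NeZero n] (hn : 2 ≤ n) (j : Fin n) :
    ∃ u v w y : Fin n → ZMod 4, v ≠ w ∧ v ≠ y ∧ w ≠ y ∧
      (balancedHypercube n).Adj u v ∧ (balancedHypercube n).Adj u w ∧
      (balancedHypercube n).Adj u y ∧ bhA n j = {u, v, w, y} := by
  have h1 := one_ne_zero_fin n hn
  by_cases hj : j = 0
  · subst hj
    refine ⟨bhV n 2 1 3, bhV n 1 0 0, bhV n 3 0 0, bhV n 1 1 3,
      bhV_ne (by decide), ?_, bhV_ne (by decide), ?_, ?_, ?_, by rw [bhA, if_pos rfl]⟩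
    · -- v ≠ y : differ at coordinate 1
      intro he
      have := congrFun he 1
      rw [bhV_app _ _ _ _ _ h1, bhV_app _ _ _ _ _ h1, if_neg h1, if_pos rfl] at this
      exact absurd this (by decide)
    · -- u ~ v
      rw [balancedHypercube, SimpleGraph.fromRel_adj]
      refine ⟨bhV_ne (by decide), Or.inr ⟨?_, Or.inr ⟨1, h1, ?_, ?_⟩⟩⟩
      · left; rw [bhV_zero, bhV_zero]; decide
      · rw [bhV_app _ _ _ _ _ h1, if_pos rfl, bhV_app _ _ _ _ _ h1, if_neg h1,
          bhV_zero]
        decide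
      · intro i hi0 hi1
        rw [bhV_app _ _ _ _ _ hi0, if_neg hi1, bhV_app _ _ _ _ _ hi0]
        split_ifs <;> rfl
    · -- u ~ w
      rw [balancedHypercube, SimpleGraph.fromRel_adj]
      refine ⟨bhV_ne (by decide), Or.inr ⟨?_, Or.inr ⟨1, h1, ?_, ?_⟩⟩⟩
      · right; rw [bhV_zero, bhV_zero]; decide
      · rw [bhV_app _ _ _ _ _ h1, if_pos rfl, bhV_app _ _ _ _ _ h1, if_neg h1,
          bhV_zero]
        decide
      · intro i hi0 hi1
        rw [bhV_app _ _ _ _ _ hi0, if_neg hi1, bhV_app _ _ _ _ _ hi0]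
        split_ifs <;> rfl
    · -- u ~ y
      rw [balancedHypercube, SimpleGraph.fromRel_adj]
      refine ⟨bhV_ne (by decide), Or.inr ⟨?_, Or.inl ?_⟩⟩
      · left; rw [bhV_zero, bhV_zero]; decide
      · intro i hi0
        rw [bhV_app _ _ _ _ _ hi0, bhV_app _ _ _ _ _ hi0]
  · refine ⟨bhV n 2 j 1, bhV n 1 j 1, bhV n 3 j 1, bhV n 1 j 2,
      bhV_ne (by decide), ?_, bhV_ne (by decide), ?_, ?_, ?_, by rw [bhA, if_neg hj]⟩
    · -- v ≠ y : differ at coordinate j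
      intro he
      have := congrFun he j
      rw [bhV_app _ _ _ _ _ hj, bhV_app _ _ _ _ _ hj, if_pos rfl, if_pos rfl] at this
      exact absurd this (by decide)
    · -- u ~ v
      rw [balancedHypercube, SimpleGraph.fromRel_adj]
      refine ⟨bhV_ne (by decide), Or.inr ⟨?_, Or.inl ?_⟩⟩
      · left; rw [bhV_zero, bhV_zero]; decide
      · intro i hi0
        rw [bhV_app _ _ _ _ _ hi0, bhV_app _ _ _ _ _ hi0]
    · -- u ~ w
      rw [balancedHypercube, SimpleGraph.fromRel_adj]
      refine ⟨bhV_ne (by decide), Or.inr ⟨?_, Or.inl ?_⟩⟩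
      · right; rw [bhV_zero, bhV_zero]; decide
      · intro i hi0
        rw [bhV_app _ _ _ _ _ hi0, bhV_app _ _ _ _ _ hi0]
    · -- u ~ y
      rw [balancedHypercube, SimpleGraph.fromRel_adj]
      refine ⟨bhV_ne (by decide), Or.inr ⟨?_, Or.inr ⟨j, hj, ?_, ?_⟩⟩⟩
      · left; rw [bhV_zero, bhV_zero]; decide
      · rw [bhV_app _ _ _ _ _ hj, if_pos rfl, bhV_app _ _ _ _ _ hj, if_pos rfl,
          bhV_zero]
        decide
      · intro i hi0 hij
        rw [bhV_app _ _ _ _ _ hi0, if_neg hij, bhV_app _ _ _ _ _ hi0, if_neg hij]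

lemma adj_zero_mem (n : ℕ) [NeZero n] (hn : 2 ≤ n) (x : Fin n → ZMod 4)
    (h : (balancedHypercube n).Adj 0 x) : ∃ j, x ∈ bhA n j := by
  rw [balancedHypercube, SimpleGraph.fromRel_adj] at h
  obtain ⟨-, h | h⟩ := h
  · obtain ⟨h0, hr | ⟨j, hj, hjv, hrest⟩⟩ := h
    · -- x agrees with 0 away from coordinate 0
      refine ⟨0, ?_⟩
      simp only [Pi.zero_apply, zero_add, zero_sub] at h0
      have hx : x = bhV n (x 0) 0 0 :=
        eq_bhV rfl (fun h => absurd rfl h) (fun k hk _ => hr k hk)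
      rw [bhA, if_pos rfl]
      rcases h0 with h0 | h0
      · rw [hx, h0]; right; left; rfl
      · rw [hx, h0, show (-1:ZMod 4) = 3 by decide]; right; right; left; rfl
    · refine ⟨j, ?_⟩
      simp only [Pi.zero_apply, zero_add, zero_sub, ZMod.val_zero, pow_zero] at h0 hjv
      have hx : x = bhV n (x 0) j 1 :=
        eq_bhV rfl (fun _ => hjv) (fun k hk0 hkj => hrest k hk0 hkj)
      rw [bhA, if_neg hj]
      rcases h0 with h0 | h0
      · rw [hx, h0]; right; left; rfl
      · rw [hx, h0, show (-1:ZMod 4) = 3 by decide]; right; right; left; rfl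
  · obtain ⟨h0, hr | ⟨j, hj, hjv, hrest⟩⟩ := h
    · simp only [Pi.zero_apply] at h0
      have hx0 : x 0 = 3 ∨ x 0 = 1 := by
        rcases h0 with h0 | h0
        · left
          have := eq_sub_of_add_eq h0.symm
          rw [this]; decide
        · right
          have := eq_add_of_sub_eq h0.symm
          rw [this]; decide
      refine ⟨0, ?_⟩
      have hx : x = bhV n (x 0) 0 0 :=
        eq_bhV rfl (fun h => absurd rfl h) (fun k hk _ => (hr k hk).symm)
      rw [bhA, if_pos rfl]
      rcases hx0 with h0 | h0
      · rw [hx, h0]; right; right; left; rfl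
      · rw [hx, h0]; right; left; rfl
    · simp only [Pi.zero_apply] at h0 hjv
      have hx0 : x 0 = 3 ∨ x 0 = 1 := by
        rcases h0 with h0 | h0
        · left
          have := eq_sub_of_add_eq h0.symm
          rw [this]; decide
        · right
          have := eq_add_of_sub_eq h0.symm
          rw [this]; decide
      have hxj : x j = 1 := by
        have h' : x j = -((-1 : ZMod 4) ^ (x 0).val) :=
          eq_neg_of_add_eq_zero_left hjv.symm
        rcases hx0 with h0 | h0 <;> rw [h', h0] <;> decide
      refine ⟨j, ?_⟩
      have hx : x = bhV n (x 0) j 1 :=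
        eq_bhV rfl (fun _ => hxj) (fun k hk0 hkj => (hrest k hk0 hkj).symm)
      rw [bhA, if_neg hj]
      rcases hx0 with h0 | h0
      · rw [hx, h0]; right; right; left; rfl
      · rw [hx, h0]; right; left; rfl

/-- For `n ≥ 2`, there is a family of exactly `n` vertex-disjoint copies of the
star `K_{1,3}` in `BH_n` whose vertex deletion disconnects `BH_n`; hence
`κ(BH_n; K_{1,3}) ≤ n`. -/
theorem balancedHypercube_K13_structure_cut (n : ℕ) [NeZero n] (hn : 2 ≤ n) :
    ∃ F : Finset (Set (Fin n → ZMod 4)), F.card = n ∧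
      (↑F : Set (Set (Fin n → ZMod 4))).Pairwise Disjoint ∧
      (∀ A ∈ F, ∃ u v w y : Fin n → ZMod 4, v ≠ w ∧ v ≠ y ∧ w ≠ y ∧
        (balancedHypercube n).Adj u v ∧ (balancedHypercube n).Adj u w ∧
        (balancedHypercube n).Adj u y ∧ A = {u, v, w, y}) ∧
      ¬ ((balancedHypercube n).induce ((⋃ A ∈ F, A)ᶜ)).Connected := by
  classical
  have hinj : Function.Injective (bhA n) := by
    intro j k h
    by_contra hjk
    have hd := bhA_disjoint n hjk
    rw [h, disjoint_self] at hd
    have : bhV n 2 1 3 ∈ bhA n k ∨ bhV n 2 k 1 ∈ bhA n k := by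
      by_cases hk : k = 0
      · left; rw [bhA, if_pos hk]; left; rfl
      · right; rw [bhA, if_neg hk]; left; rfl
    rcases this with hm | hm <;> · rw [hd] at hm; exact hm
  refine ⟨Finset.image (bhA n) Finset.univ, ?_, ?_, ?_, ?_⟩
  · rw [Finset.card_image_of_injective _ hinj, Finset.card_univ, Fintype.card_fin]
  · intro s hs t ht hst
    simp only [Finset.coe_image, Finset.coe_univ, Set.image_univ,
      Set.mem_range] at hs ht
    obtain ⟨j, rfl⟩ := hs
    obtain ⟨k, rfl⟩ := ht
    exact bhA_disjoint n (fun h => hst (by rw [h]))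
  · intro A hA
    rw [Finset.mem_image] at hA
    obtain ⟨j, -, rfl⟩ := hA
    exact bhA_star n hn j
  · intro hcon
    set U : Set (Fin n → ZMod 4) :=
      ⋃ A ∈ Finset.image (bhA n) Finset.univ, A with hU
    have hUmem : ∀ x, x ∈ U ↔ ∃ j, x ∈ bhA n j := by
      intro x
      simp [hU]
    have h0 : (0 : Fin n → ZMod 4) ∈ Uᶜ := by
      intro hm
      obtain ⟨j, hj⟩ := (hUmem 0).1 hm
      exact zero_notmem_bhA n hn j hj
    have h2 : bhV n 2 0 0 ∈ Uᶜ := by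
      intro hm
      obtain ⟨j, hj⟩ := (hUmem _).1 hm
      exact z2_notmem_bhA n hn j hj
    obtain ⟨p⟩ := hcon.preconnected ⟨0, h0⟩ ⟨bhV n 2 0 0, h2⟩
    have hne : (⟨0, h0⟩ : (Uᶜ : Set _)) ≠ ⟨bhV n 2 0 0, h2⟩ := by
      intro h
      have h00 := congrFun (Subtype.mk_eq_mk.mp h) 0
      rw [bhV_zero, Pi.zero_apply] at h00
      exact absurd h00 (by decide)
    have hadj := SimpleGraph.Walk.adj_snd
      (SimpleGraph.Walk.not_nil_of_ne hne (p := p))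
    set b := p.getVert 1 with hbdef
    have hb : (balancedHypercube n).Adj 0 b.1 := hadj
    obtain ⟨j, hj⟩ := adj_zero_mem n hn b.1 hb
    exact b.2 ((hUmem b.1).2 ⟨j, hj⟩)
end

section
/- For any vertex x of BH_n (n ≥ 2), there is exactly one induced subgraph of BH_n isomorphic to K_{1,3}, vertex-disjoint from x, whose leaf set contains 3 neighbors of x; namely the star must be centered at the unique vertex whose coordinates agree with x except the first coordinate differs by 2 mod 4. -/
private lemma bh_sgn_add_one : ∀ a : ZMod 4, (-1:ZMod 4) ^ ((a+1).val) = - (-1:ZMod 4) ^ a.val := by decide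
private lemma bh_sgn_sub_one : ∀ a : ZMod 4, (-1:ZMod 4) ^ ((a-1).val) = - (-1:ZMod 4) ^ a.val := by decide
private lemma bh_sgn_add_two : ∀ a : ZMod 4, (-1:ZMod 4) ^ ((a+2).val) = (-1:ZMod 4) ^ a.val := by decide
private lemma bh_add_sgn_ne : ∀ a b : ZMod 4, b + (-1:ZMod 4) ^ a.val ≠ b := by decide
private lemma bh_sgn_two : ∀ a b : ZMod 4, b + (-1:ZMod 4) ^ a.val + (-1:ZMod 4) ^ a.val ≠ b := by decide
private lemma bh_zfacts : ∀ b : ZMod 4, b + 1 ≠ b ∧ b - 1 ≠ b ∧ b + 2 ≠ b ∧ b + 1 ≠ b - 1 ∧ b + 2 ≠ b + 1 ∧ b + 2 ≠ b - 1 := by decide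

private def BHNbr (n : ℕ) [NeZero n] (x z : Fin n → ZMod 4) : Prop :=
  (z 0 = x 0 + 1 ∨ z 0 = x 0 - 1) ∧
  ((∀ i, i ≠ 0 → z i = x i) ∨
    ∃ j : Fin n, j ≠ 0 ∧ z j = x j + (-1 : ZMod 4) ^ (x 0).val ∧
      ∀ i, i ≠ 0 → i ≠ j → z i = x i)

private lemma bh_adj_iff {n : ℕ} [NeZero n] (x z : Fin n → ZMod 4) :
    (balancedHypercube n).Adj x z ↔ BHNbr n x z := by
  rw [balancedHypercube, SimpleGraph.fromRel_adj]
  constructor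
  · rintro ⟨hne, h | h⟩
    · exact h
    · obtain ⟨h0, hrest⟩ := h
      refine ⟨?_, ?_⟩
      · rcases h0 with h0 | h0
        · right; rw [h0]; ring
        · left; rw [h0]; ring
      · rcases hrest with h | ⟨j, hj0, hj, hr⟩
        · left; intro i hi; exact (h i hi).symm
        · right
          refine ⟨j, hj0, ?_, fun i hi hij => (hr i hi hij).symm⟩
          have hs : (-1:ZMod 4) ^ ((x 0).val) = - (-1:ZMod 4) ^ ((z 0).val) := by
            rcases h0 with h0 | h0
            · rw [h0, bh_sgn_add_one]
            · rw [h0, bh_sgn_sub_one]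
          rw [hs, hj]; ring
  · intro h
    refine ⟨fun hxz => ?_, Or.inl h⟩
    have h0 := h.1
    rw [← hxz] at h0
    rcases h0 with h1 | h1
    · exact (bh_zfacts (x 0)).1 h1.symm
    · exact (bh_zfacts (x 0)).2.1 h1.symm

/-- structure of a common neighbor when `u` and `x` differ at an off-0 coordinate. -/
private lemma bh_common_structure {n : ℕ} [NeZero n] {x u z : Fin n → ZMod 4}
    (hpar : (-1:ZMod 4) ^ ((u 0).val) = (-1:ZMod 4) ^ ((x 0).val))
    {k : Fin n} (hk0 : k ≠ 0) (hk : u k ≠ x k)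
    (hxz : BHNbr n x z) (huz : BHNbr n u z) :
    (u k = x k + (-1:ZMod 4) ^ ((x 0).val) ∧ z k = u k ∧ ∀ i, i ≠ 0 → i ≠ k → z i = x i) ∨
    (x k = u k + (-1:ZMod 4) ^ ((x 0).val) ∧ z k = x k ∧ ∀ i, i ≠ 0 → i ≠ k → z i = u i) := by
  set s := (-1:ZMod 4) ^ ((x 0).val) with hs
  rcases hxz.2 with hA | ⟨m, hm0, hmB, hB⟩ <;>
    rcases huz.2 with hA' | ⟨m', hm'0, hm'B, hB'⟩
  · exact absurd ((hA' k hk0).symm.trans (hA k hk0)) hk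
  · -- z = x off 0 ; z = u off 0 except m'
    rw [hpar] at hm'B
    by_cases hkm' : k = m'
    · subst hkm'
      refine Or.inr ⟨(hA k hk0) ▸ hm'B, hA k hk0, fun i hi hik => hB' i hi hik⟩
    · exact absurd ((hB' k hk0 hkm').symm.trans (hA k hk0)) hk
  · -- z = x off 0 except m ; z = u off 0
    by_cases hkm : k = m
    · subst hkm
      refine Or.inl ⟨(hA' k hk0) ▸ hmB, hA' k hk0, fun i hi hik => hB i hi hik⟩
    · exact absurd ((hA' k hk0).symm.trans (hB k hk0 hkm)) hk
  · rw [hpar] at hm'B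
    by_cases hkm : k = m <;> by_cases hkm' : k = m'
    · subst hkm; subst hkm'
      exact absurd (add_right_cancel (hm'B.symm.trans hmB)) hk
    · subst hkm
      refine Or.inl ⟨(hB' k hk0 hkm').symm ▸ hmB, hB' k hk0 hkm', fun i hi hik => hB i hi hik⟩
    · subst hkm'
      refine Or.inr ⟨(hB k hk0 hkm).symm ▸ hm'B, hB k hk0 hkm, fun i hi hik => hB' i hi hik⟩
    · exact absurd ((hB' k hk0 hkm').symm.trans (hB k hk0 hkm)) hk

private lemma bh_common_unique {n : ℕ} [NeZero n] {x u z z' : Fin n → ZMod 4}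
    (hpar : (-1:ZMod 4) ^ ((u 0).val) = (-1:ZMod 4) ^ ((x 0).val))
    {k : Fin n} (hk0 : k ≠ 0) (hk : u k ≠ x k)
    (hxz : BHNbr n x z) (huz : BHNbr n u z)
    (hxz' : BHNbr n x z') (huz' : BHNbr n u z') (h0 : z 0 = z' 0) : z = z' := by
  have H := bh_common_structure hpar hk0 hk hxz huz
  have H' := bh_common_structure hpar hk0 hk hxz' huz'
  funext i
  by_cases hi : i = 0
  · rw [hi]; exact h0
  rcases H with ⟨hc, hzk, hzo⟩ | ⟨hc, hzk, hzo⟩ <;>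
    rcases H' with ⟨hc', hzk', hzo'⟩ | ⟨hc', hzk', hzo'⟩
  · by_cases hik : i = k
    · rw [hik, hzk, hzk']
    · rw [hzo i hi hik, hzo' i hi hik]
  · exact absurd (by rw [hc'] at hc; exact hc.symm) (bh_sgn_two (x 0) (u k))
  · exact absurd (by rw [hc] at hc'; exact hc'.symm) (bh_sgn_two (x 0) (u k))
  · by_cases hik : i = k
    · rw [hik, hzk, hzk']
    · rw [hzo i hi hik, hzo' i hi hik]

private lemma bh_wfact : ∀ b : ZMod 4, b - 1 = b + 2 + 1 := by decide
private lemma bh_lin : ∀ a b : ZMod 4, (a + 1 = b + 1 → a = b) ∧ (a - 1 = b - 1 → a = b) ∧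
    (a - 1 = b + 1 → a = b + 2) ∧ (a + 1 = b - 1 → a = b + 2) := by decide

private lemma bh_uniq {n : ℕ} [NeZero n] (x u : Fin n → ZMod 4) (hux : u ≠ x)
    (hex : ∃ v w y : Fin n → ZMod 4, v ≠ w ∧ v ≠ y ∧ w ≠ y ∧
      BHNbr n u v ∧ BHNbr n u w ∧ BHNbr n u y ∧
      BHNbr n x v ∧ BHNbr n x w ∧ BHNbr n x y) :
    u = Function.update x 0 (x 0 + 2) := by
  obtain ⟨v, w, y, hvw, hvy, hwy, huv, huw, huy, hxv, hxw, hxy⟩ := hex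
  have hu0 : u 0 = x 0 ∨ u 0 = x 0 + 2 := by
    rcases hxv.1 with h1 | h1 <;> rcases huv.1 with h2 | h2
    · exact Or.inl ((bh_lin (u 0) (x 0)).1 (h2.symm.trans h1))
    · exact Or.inr ((bh_lin (u 0) (x 0)).2.2.1 (h2.symm.trans h1))
    · exact Or.inr ((bh_lin (u 0) (x 0)).2.2.2 (h2.symm.trans h1))
    · exact Or.inl ((bh_lin (u 0) (x 0)).2.1 (h2.symm.trans h1))
  have hpar : (-1:ZMod 4) ^ ((u 0).val) = (-1:ZMod 4) ^ ((x 0).val) := by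
    rcases hu0 with h | h
    · rw [h]
    · rw [h, bh_sgn_add_two]
  have hoff : ∀ k : Fin n, k ≠ 0 → u k = x k := by
    intro k hk0
    by_contra hk
    have CU : ∀ z z' : Fin n → ZMod 4, BHNbr n x z → BHNbr n u z → BHNbr n x z' →
        BHNbr n u z' → z 0 = z' 0 → z = z' :=
      fun z z' a b c d e => bh_common_unique hpar hk0 hk a b c d e
    rcases hxv.1 with h1 | h1 <;> rcases hxw.1 with h2 | h2 <;> rcases hxy.1 with h3 | h3 <;>
      first
        | exact hvw (CU v w hxv huv hxw huw (h1.trans h2.symm))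
        | exact hvy (CU v y hxv huv hxy huy (h1.trans h3.symm))
        | exact hwy (CU w y hxw huw hxy huy (h2.trans h3.symm))
  have hu0' : u 0 = x 0 + 2 := by
    rcases hu0 with h | h
    · exact absurd (funext fun i => by
        by_cases hi : i = 0
        · rw [hi, h]
        · exact hoff i hi) hux
    · exact h
  funext i
  by_cases hi : i = 0
  · rw [hi, hu0', Function.update_self]
  · rw [Function.update_of_ne hi, hoff i hi]


/-- For any vertex `x` of `BH_n` (`n ≥ 2`), there is exactly one induced star
`K_{1,3}` of `BH_n` vertex-disjoint from `x` whose three leaves are neighbors of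
`x`: its center must be the unique vertex agreeing with `x` in all coordinates
except that the first differs by `2` mod `4`. -/
theorem balancedHypercube_unique_K13_center (n : ℕ) [NeZero n] (hn : 2 ≤ n)
    (x : Fin n → ZMod 4) :
    (∃! u : Fin n → ZMod 4, u ≠ x ∧ ¬ (balancedHypercube n).Adj x u ∧
      ∃ v w y : Fin n → ZMod 4, v ≠ w ∧ v ≠ y ∧ w ≠ y ∧
        (balancedHypercube n).Adj u v ∧ (balancedHypercube n).Adj u w ∧
        (balancedHypercube n).Adj u y ∧
        (balancedHypercube n).Adj x v ∧ (balancedHypercube n).Adj x w ∧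
        (balancedHypercube n).Adj x y) ∧
    (∀ u : Fin n → ZMod 4, (u ≠ x ∧ ¬ (balancedHypercube n).Adj x u ∧
      ∃ v w y : Fin n → ZMod 4, v ≠ w ∧ v ≠ y ∧ w ≠ y ∧
        (balancedHypercube n).Adj u v ∧ (balancedHypercube n).Adj u w ∧
        (balancedHypercube n).Adj u y ∧
        (balancedHypercube n).Adj x v ∧ (balancedHypercube n).Adj x w ∧
        (balancedHypercube n).Adj x y) →
      u = Function.update x 0 (x 0 + 2)) := by
  set s : ZMod 4 := (-1:ZMod 4) ^ ((x 0).val) with hs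
  have uniq : ∀ u : Fin n → ZMod 4, (u ≠ x ∧ ¬ (balancedHypercube n).Adj x u ∧
      ∃ v w y : Fin n → ZMod 4, v ≠ w ∧ v ≠ y ∧ w ≠ y ∧
        (balancedHypercube n).Adj u v ∧ (balancedHypercube n).Adj u w ∧
        (balancedHypercube n).Adj u y ∧
        (balancedHypercube n).Adj x v ∧ (balancedHypercube n).Adj x w ∧
        (balancedHypercube n).Adj x y) → u = Function.update x 0 (x 0 + 2) := by
    rintro u ⟨hux, -, v, w, y, hvw, hvy, hwy, huv, huw, huy, hxv, hxw, hxy⟩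
    exact bh_uniq x u hux ⟨v, w, y, hvw, hvy, hwy,
      (bh_adj_iff u v).1 huv, (bh_adj_iff u w).1 huw, (bh_adj_iff u y).1 huy,
      (bh_adj_iff x v).1 hxv, (bh_adj_iff x w).1 hxw, (bh_adj_iff x y).1 hxy⟩
  refine ⟨⟨Function.update x 0 (x 0 + 2), ?_, fun uu huu => uniq uu huu⟩, uniq⟩
  set u : Fin n → ZMod 4 := Function.update x 0 (x 0 + 2) with hu
  set j : Fin n := ⟨1, hn⟩ with hjdef
  have hj0 : j ≠ 0 := by simp [hjdef, Fin.ext_iff]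
  set v : Fin n → ZMod 4 := Function.update x 0 (x 0 + 1) with hv
  set w : Fin n → ZMod 4 := Function.update x 0 (x 0 - 1) with hw
  set y : Fin n → ZMod 4 := Function.update v j (x j + s) with hy
  have hu0 : u 0 = x 0 + 2 := Function.update_self ..
  have huoff : ∀ i : Fin n, i ≠ 0 → u i = x i := fun i hi => Function.update_of_ne hi ..
  have hv0 : v 0 = x 0 + 1 := Function.update_self ..
  have hvoff : ∀ i : Fin n, i ≠ 0 → v i = x i := fun i hi => Function.update_of_ne hi ..
  have hw0 : w 0 = x 0 - 1 := Function.update_self ..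
  have hwoff : ∀ i : Fin n, i ≠ 0 → w i = x i := fun i hi => Function.update_of_ne hi ..
  have hy0 : y 0 = x 0 + 1 := by rw [hy, Function.update_of_ne (Ne.symm hj0), hv0]
  have hyj : y j = x j + s := Function.update_self ..
  have hyoff : ∀ i : Fin n, i ≠ 0 → i ≠ j → y i = x i := fun i hi hij => by
    rw [hy, Function.update_of_ne hij, hvoff i hi]
  have hpar : (-1:ZMod 4) ^ ((u 0).val) = s := by rw [hu0, bh_sgn_add_two]
  refine ⟨fun h => (bh_zfacts (x 0)).2.2.1 (by rw [← hu0]; exact congrFun h 0), ?_,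
    v, w, y, ?_, ?_, ?_, ?_, ?_, ?_, ?_, ?_, ?_⟩
  · intro h
    rcases ((bh_adj_iff x u).1 h).1 with h1 | h1
    · exact (bh_zfacts (x 0)).2.2.2.2.1 (hu0 ▸ h1)
    · exact (bh_zfacts (x 0)).2.2.2.2.2 (hu0 ▸ h1)
  · intro h
    have := congrFun h 0
    rw [hv0, hw0] at this
    exact (bh_zfacts (x 0)).2.2.2.1 this
  · intro h
    have := congrFun h j
    rw [hvoff j hj0, hyj] at this
    exact bh_add_sgn_ne (x 0) (x j) this.symm
  · intro h
    have := congrFun h 0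
    rw [hw0, hy0] at this
    exact (bh_zfacts (x 0)).2.2.2.1 this.symm
  · refine (bh_adj_iff u v).2 ⟨Or.inr (by rw [hv0, hu0]; ring), Or.inl fun i hi => by
      rw [hvoff i hi, huoff i hi]⟩
  · refine (bh_adj_iff u w).2 ⟨Or.inl (by rw [hw0, hu0, bh_wfact]), Or.inl fun i hi => by
      rw [hwoff i hi, huoff i hi]⟩
  · refine (bh_adj_iff u y).2 ⟨Or.inr (by rw [hy0, hu0]; ring),
      Or.inr ⟨j, hj0, by rw [hyj, hpar, huoff j hj0], fun i hi hij => by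
        rw [hyoff i hi hij, huoff i hi]⟩⟩
  · exact (bh_adj_iff x v).2 ⟨Or.inl hv0, Or.inl hvoff⟩
  · exact (bh_adj_iff x w).2 ⟨Or.inr hw0, Or.inl hwoff⟩
  · exact (bh_adj_iff x y).2 ⟨Or.inl hy0, Or.inr ⟨j, hj0, hyj, hyoff⟩⟩
end

section
/- For n ≥ 2, there exists a family of exactly n vertex-disjoint 4-cycles in BH_n whose vertex deletion disconnects BH_n; hence κ(BH_n; C_4) ≤ n. -/

def colV (n : ℕ) [NeZero n] (j : Fin n) (k : ZMod 4) : Fin n → ZMod 4 :=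
  fun i => if i = 0 then k else if i = j then 1 else 0

def spV (n : ℕ) [NeZero n] (j1 : Fin n) (k : ZMod 4) : Fin n → ZMod 4 :=
  fun i => if i = 0 then k else if i = j1 ∧ (k = 0 ∨ k = 2) then 3 else 0

lemma adj_col (n : ℕ) [NeZero n] (j : Fin n) (k : ZMod 4) :
    (balancedHypercube n).Adj (colV n j k) (colV n j (k+1)) := by
  rw [balancedHypercube, SimpleGraph.fromRel_adj]
  constructor
  · intro h
    have := congrFun h 0
    simp [colV] at this
    exact absurd this (by decide)
  · left
    refine ⟨Or.inl ?_, Or.inl ?_⟩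
    · simp [colV]
    · intro i hi; simp [colV, hi]

lemma adj_sp (n : ℕ) [NeZero n] (j1 : Fin n) (hj1 : j1 ≠ 0) (k : ZMod 4) :
    (balancedHypercube n).Adj (spV n j1 k) (spV n j1 (k+1)) := by
  rw [balancedHypercube, SimpleGraph.fromRel_adj]
  constructor
  · intro h
    have := congrFun h 0
    simp [spV] at this
    exact absurd this (by decide)
  · left
    refine ⟨Or.inl ?_, Or.inr ⟨j1, hj1, ?_, ?_⟩⟩
    · simp [spV]
    · simp only [spV, if_neg hj1]
      fin_cases k <;> simp <;> decide
    · intro i hi hij; simp [spV, hi, hij]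

def cyc (n : ℕ) [NeZero n] (j1 j : Fin n) : Set (Fin n → ZMod 4) :=
  if j = 0 then {spV n j1 0, spV n j1 1, spV n j1 2, spV n j1 3}
  else {colV n j 0, colV n j 1, colV n j 2, colV n j 3}

lemma mem_cyc_ne (n : ℕ) [NeZero n] (j1 j : Fin n) (hj : j ≠ 0)
    {v : Fin n → ZMod 4} (hv : v ∈ cyc n j1 j) : v j = 1 := by
  rw [cyc, if_neg hj] at hv
  rcases hv with rfl | rfl | rfl | rfl <;> simp [colV, hj]

lemma mem_cyc_zero (n : ℕ) [NeZero n] (j1 j : Fin n) (hj : j ≠ 0)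
    {v : Fin n → ZMod 4} (hv : v ∈ cyc n j1 0) : v j ≠ 1 := by
  rw [cyc, if_pos rfl] at hv
  rcases hv with rfl | rfl | rfl | rfl <;> simp [spV, hj] <;>
    split <;> decide

lemma mem_cyc_other (n : ℕ) [NeZero n] (j1 j k : Fin n) (hj : j ≠ 0)
    (hk : k ≠ 0) (hjk : j ≠ k) {v : Fin n → ZMod 4} (hv : v ∈ cyc n j1 k) :
    v j = 0 := by
  rw [cyc, if_neg hk] at hv
  rcases hv with rfl | rfl | rfl | rfl <;> simp [colV, hj, hjk]

lemma cyc_disjoint (n : ℕ) [NeZero n] (j1 : Fin n) {j k : Fin n} (hjk : j ≠ k) :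
    Disjoint (cyc n j1 j) (cyc n j1 k) := by
  rw [Set.disjoint_left]
  intro v hvj hvk
  by_cases hj : j = 0
  · subst hj
    have hk : k ≠ 0 := fun h => hjk h.symm
    exact mem_cyc_zero n j1 k hk hvj (mem_cyc_ne n j1 k hk hvk)
  · by_cases hk : k = 0
    · subst hk
      exact mem_cyc_zero n j1 j hj hvk (mem_cyc_ne n j1 j hj hvj)
    · have h1 := mem_cyc_ne n j1 j hj hvj
      have h0 := mem_cyc_other n j1 j k hj hk hjk hvk
      rw [h0] at h1
      exact absurd h1 (by decide)

lemma neighbor_mem (n : ℕ) [NeZero n] (j1 : Fin n) (hj1 : j1 ≠ 0)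
    {y : Fin n → ZMod 4} (h : (balancedHypercube n).Adj 0 y) :
    ∃ j : Fin n, y ∈ cyc n j1 j := by
  rw [balancedHypercube, SimpleGraph.fromRel_adj] at h
  obtain ⟨-, h | h⟩ := h
  · obtain ⟨h0, hrest | ⟨j, hj, hjval, hrest⟩⟩ := h
    · -- y 0 ∈ {1,3}, rest zero : y ∈ cyc 0
      refine ⟨0, ?_⟩
      rw [cyc, if_pos rfl]
      simp only [Pi.zero_apply, zero_add, zero_sub] at h0
      rcases h0 with h0 | h0
      · right; left
        funext i
        by_cases hi : i = 0
        · subst hi; simpa [spV] using h0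
        · simp [spV, hi, hrest i hi,
            show ¬((1:ZMod 4)=0 ∨ (1:ZMod 4)=2) by decide]
      · right; right; right
        funext i
        by_cases hi : i = 0
        · subst hi; simp [spV]; rw [h0]; decide
        · simp [spV, hi, hrest i hi,
            show ¬((3:ZMod 4)=0 ∨ (3:ZMod 4)=2) by decide]
    · -- y j = 1, y 0 ∈ {1,3}, rest zero : y ∈ cyc j
      refine ⟨j, ?_⟩
      rw [cyc, if_neg hj]
      simp only [Pi.zero_apply, zero_add, zero_sub, ZMod.val_zero, pow_zero] at h0 hjval
      rcases h0 with h0 | h0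
      · right; left
        funext i
        by_cases hi : i = 0
        · subst hi; simpa [colV, hj] using h0
        · by_cases hij : i = j
          · subst hij; simp [colV, hi, hjval]
          · simp [colV, hi, hij, hrest i hi hij]
      · right; right; right
        funext i
        by_cases hi : i = 0
        · subst hi; simp [colV, hj]; rw [h0]; decide
        · by_cases hij : i = j
          · subst hij; simp [colV, hi, hjval]
          · simp [colV, hi, hij, hrest i hi hij]
  · obtain ⟨h0, hrest | ⟨j, hj, hjval, hrest⟩⟩ := h
    · -- 0 = y 0 ± 1, rest of y zero
      refine ⟨0, ?_⟩
      rw [cyc, if_pos rfl]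
      simp only [Pi.zero_apply] at h0
      have h0' : y 0 = 3 ∨ y 0 = 1 := by
        rcases h0 with h0 | h0
        · left; rw [eq_sub_of_add_eq h0.symm]; decide
        · right; exact sub_eq_zero.mp h0.symm
      rcases h0' with h0' | h0'
      · right; right; right
        funext i
        by_cases hi : i = 0
        · subst hi; simp [spV, h0']
        · simp [spV, hi, (hrest i hi).symm,
            show ¬((3:ZMod 4)=0 ∨ (3:ZMod 4)=2) by decide]
      · right; left
        funext i
        by_cases hi : i = 0
        · subst hi; simp [spV, h0']
        · simp [spV, hi, (hrest i hi).symm,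
            show ¬((1:ZMod 4)=0 ∨ (1:ZMod 4)=2) by decide]
    · refine ⟨j, ?_⟩
      rw [cyc, if_neg hj]
      simp only [Pi.zero_apply] at h0 hjval
      have h0' : y 0 = 3 ∨ y 0 = 1 := by
        rcases h0 with h0 | h0
        · left; rw [eq_sub_of_add_eq h0.symm]; decide
        · right; exact sub_eq_zero.mp h0.symm
      have hyj : y j = 1 := by
        rcases h0' with h0' | h0' <;> rw [h0'] at hjval <;>
          (rw [eq_sub_of_add_eq hjval.symm]; decide)
      rcases h0' with h0' | h0'
      · right; right; right
        funext i
        by_cases hi : i = 0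
        · subst hi; simp [colV, hj, h0']
        · by_cases hij : i = j
          · subst hij; simp [colV, hi, hyj]
          · simp [colV, hi, hij, (hrest i hi hij).symm]
      · right; left
        funext i
        by_cases hi : i = 0
        · subst hi; simp [colV, hj, h0']
        · by_cases hij : i = j
          · subst hij; simp [colV, hi, hyj]
          · simp [colV, hi, hij, (hrest i hi hij).symm]

lemma zero_not_mem (n : ℕ) [NeZero n] (j1 : Fin n) (hj1 : j1 ≠ 0) (j : Fin n) :
    (0 : Fin n → ZMod 4) ∉ cyc n j1 j := by
  intro hv
  by_cases hj : j = 0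
  · subst hj
    rw [cyc, if_pos rfl] at hv
    rcases hv with h | h | h | h <;> [skip; skip; skip; skip] <;>
      first
      | (have := congrFun h j1; simp [spV, hj1] at this;
         revert this; decide)
      | (have := congrFun h 0; simp [spV] at this;
         revert this; decide)
  · rw [cyc, if_neg hj] at hv
    rcases hv with h | h | h | h <;>
      (have := congrFun h j; simp [colV, hj] at this; exact absurd this (by decide))

lemma w_not_mem (n : ℕ) [NeZero n] (j1 : Fin n) (hj1 : j1 ≠ 0) (j : Fin n) :
    (fun i => if i = j1 then (2 : ZMod 4) else 0) ∉ cyc n j1 j := by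
  intro hv
  by_cases hj : j = 0
  · subst hj
    rw [cyc, if_pos rfl] at hv
    rcases hv with h | h | h | h <;>
      first
      | (have := congrFun h j1; simp [spV, hj1] at this;
         revert this; decide)
      | (have := congrFun h 0; simp [spV, hj1] at this;
         revert this; decide)
  · rw [cyc, if_neg hj] at hv
    rcases hv with h | h | h | h <;>
      (have := congrFun h j; simp [colV, hj] at this;
       by_cases hjj : j = j1 <;> simp [hjj] at this <;> revert this <;> decide)

/-- For `n ≥ 2`, there is a family of exactly `n` vertex-disjoint `4`-cycles in
`BH_n` whose vertex deletion disconnects `BH_n`; hence `κ(BH_n; C_4) ≤ n`. -/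
theorem balancedHypercube_C4_structure_cut (n : ℕ) [NeZero n] (hn : 2 ≤ n) :
    ∃ F : Finset (Set (Fin n → ZMod 4)), F.card = n ∧
      (↑F : Set (Set (Fin n → ZMod 4))).Pairwise Disjoint ∧
      (∀ A ∈ F, ∃ a b c d : Fin n → ZMod 4, a ≠ c ∧ b ≠ d ∧
        (balancedHypercube n).Adj a b ∧ (balancedHypercube n).Adj b c ∧
        (balancedHypercube n).Adj c d ∧ (balancedHypercube n).Adj d a ∧
        A = {a, b, c, d}) ∧
      ¬ ((balancedHypercube n).induce ((⋃ A ∈ F, A)ᶜ)).Connected := by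
  classical
  have hn1 : 1 < n := hn
  set j1 : Fin n := ⟨1, hn1⟩ with hj1def
  have hj1 : j1 ≠ 0 := by
    intro h
    have := congrArg Fin.val h
    simp [hj1def] at this
  have hinj : Function.Injective (cyc n j1) := by
    intro a b hab
    by_contra hne
    have hd := cyc_disjoint n j1 hne
    rw [hab, disjoint_self] at hd
    have hne' : (cyc n j1 b).Nonempty := by
      rw [cyc]; split
      · exact ⟨spV n j1 0, by simp⟩
      · exact ⟨colV n b 0, by simp⟩
    exact hne'.ne_empty hd
  refine ⟨Finset.univ.image (cyc n j1), ?_, ?_, ?_, ?_⟩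
  · rw [Finset.card_image_of_injective _ hinj, Finset.card_univ, Fintype.card_fin]
  · intro A hA B hB hAB
    simp only [Finset.coe_image, Finset.coe_univ, Set.image_univ, Set.mem_range] at hA hB
    obtain ⟨j, rfl⟩ := hA
    obtain ⟨k, rfl⟩ := hB
    exact cyc_disjoint n j1 (fun h => hAB (by rw [h]))
  · intro A hA
    simp only [Finset.mem_image, Finset.mem_univ, true_and] at hA
    obtain ⟨j, rfl⟩ := hA
    by_cases hj : j = 0
    · subst hj
      refine ⟨spV n j1 0, spV n j1 1, spV n j1 2, spV n j1 3, ?_, ?_, ?_, ?_, ?_, ?_, ?_⟩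
      · intro h
        have := congrFun h 0
        simp [spV] at this
        exact absurd this (by decide)
      · intro h
        have := congrFun h 0
        simp [spV] at this
        exact absurd this (by decide)
      · simpa using adj_sp n j1 hj1 0
      · have := adj_sp n j1 hj1 1; rw [show ((1:ZMod 4)+1) = 2 from by decide] at this; exact this
      · have := adj_sp n j1 hj1 2; rw [show ((2:ZMod 4)+1) = 3 from by decide] at this; exact this
      · have := adj_sp n j1 hj1 3
        rw [show ((3:ZMod 4)+1) = 0 from by decide] at this
        exact this
      · rw [cyc, if_pos rfl]
    · refine ⟨colV n j 0, colV n j 1, colV n j 2, colV n j 3, ?_, ?_, ?_, ?_, ?_, ?_, ?_⟩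
      · intro h
        have := congrFun h 0
        simp [colV] at this
        exact absurd this (by decide)
      · intro h
        have := congrFun h 0
        simp [colV] at this
        exact absurd this (by decide)
      · simpa using adj_col n j 0
      · have := adj_col n j 1; rw [show ((1:ZMod 4)+1) = 2 from by decide] at this; exact this
      · have := adj_col n j 2; rw [show ((2:ZMod 4)+1) = 3 from by decide] at this; exact this
      · have := adj_col n j 3
        rw [show ((3:ZMod 4)+1) = 0 from by decide] at this
        exact this
      · rw [cyc, if_neg hj]
  · intro hc
    have hz : (0 : Fin n → ZMod 4) ∈ (⋃ A ∈ Finset.univ.image (cyc n j1), A)ᶜ := by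
      simp only [Set.mem_compl_iff, Set.mem_iUnion]
      rintro ⟨A, hA, h⟩
      simp only [Finset.mem_image, Finset.mem_univ, true_and] at hA
      obtain ⟨j, rfl⟩ := hA
      exact zero_not_mem n j1 hj1 j h
    have hw : (fun i => if i = j1 then (2 : ZMod 4) else 0) ∈
        (⋃ A ∈ Finset.univ.image (cyc n j1), A)ᶜ := by
      simp only [Set.mem_compl_iff, Set.mem_iUnion]
      rintro ⟨A, hA, h⟩
      simp only [Finset.mem_image, Finset.mem_univ, true_and] at hA
      obtain ⟨j, rfl⟩ := hA
      exact w_not_mem n j1 hj1 j h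
    obtain ⟨p⟩ := hc.preconnected ⟨0, hz⟩ ⟨_, hw⟩
    have hne : (⟨0, hz⟩ : {x // x ∈ (⋃ A ∈ Finset.univ.image (cyc n j1), A)ᶜ}) ≠ ⟨_, hw⟩ := by
      intro h
      have := congrFun (congrArg Subtype.val h) j1
      simp at this
      exact absurd this (by decide)
    have hnil := SimpleGraph.Walk.not_nil_of_ne (p := p) hne
    have hadj := SimpleGraph.Walk.adj_snd hnil
    have hadj' : (balancedHypercube n).Adj 0 ((p.getVert 1) : Fin n → ZMod 4) := hadj
    obtain ⟨j, hj⟩ := neighbor_mem n j1 hj1 hadj'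
    exact (p.getVert 1).2 (Set.mem_iUnion₂.mpr
      ⟨cyc n j1 j, Finset.mem_image_of_mem _ (Finset.mem_univ j), hj⟩)
end
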